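/- Let ψ be a unit speed curve in ℝ³ with κ > 0, and suppose its principal normal N makes a constant angle φ = arccos(n) (with 0 < |n| < 1) with a fixed unit vector d, i.e. ⟨N(s), d⟩ = n for all s. Then the ratio f = τ/κ, viewed as a function of θ = ∫κ ds (with a suitable choice of origin for θ), satisfies f(θ) = ± mθ/√(1 - m²θ²), where m = n/√(1-n²); equivalently τ(s) = ± m κ(s)·(∫κ ds)/√(1 - m²(∫κ ds)²). -/

import Mathlib

open Real
open scoped RealInnerProductSpace

lemma orth_decomp (T N B d : EuclideanSpace ℝ (Fin 3))
    (hTn : ‖T‖ = 1) (hNn : ‖N‖ = 1) (hBn : ‖B‖ = 1)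
    (hTN : ⟪T, N⟫ = 0) (hTB : ⟪T, B⟫ = 0) (hNB : ⟪N, B⟫ = 0)
    (hd : ‖d‖ = 1) :
    ⟪T, d⟫ ^ 2 + ⟪N, d⟫ ^ 2 + ⟪B, d⟫ ^ 2 = 1 := by
  have hTT : ⟪T, T⟫ = 1 := by rw [real_inner_self_eq_norm_sq, hTn]; norm_num
  have hNN : ⟪N, N⟫ = 1 := by rw [real_inner_self_eq_norm_sq, hNn]; norm_num
  have hBB : ⟪B, B⟫ = 1 := by rw [real_inner_self_eq_norm_sq, hBn]; norm_num
  have hNT : ⟪N, T⟫ = 0 := by rw [real_inner_comm]; exact hTN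
  have hBT : ⟪B, T⟫ = 0 := by rw [real_inner_comm]; exact hTB
  have hBN : ⟪B, N⟫ = 0 := by rw [real_inner_comm]; exact hNB
  set e := d - ⟪T, d⟫ • T - ⟪N, d⟫ • N - ⟪B, d⟫ • B with he_def
  have hTe : ⟪T, e⟫ = 0 := by
    simp only [he_def, inner_sub_right, real_inner_smul_right, hTT, hTN, hTB]; ring
  have hNe : ⟪N, e⟫ = 0 := by
    simp only [he_def, inner_sub_right, real_inner_smul_right, hNN, hNT, hNB]; ring
  have hBe : ⟪B, e⟫ = 0 := by
    simp only [he_def, inner_sub_right, real_inner_smul_right, hBB, hBT, hBN]; ring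
  have hTe' : ⟪e, T⟫ = 0 := by rw [real_inner_comm]; exact hTe
  have hNe' : ⟪e, N⟫ = 0 := by rw [real_inner_comm]; exact hNe
  have hBe' : ⟪e, B⟫ = 0 := by rw [real_inner_comm]; exact hBe
  have he0 : e = 0 := by
    by_contra hne
    have hen : ‖e‖ ≠ 0 := norm_ne_zero_iff.mpr hne
    have hTu : ⟪T, ‖e‖⁻¹ • e⟫ = 0 := by rw [real_inner_smul_right, hTe, mul_zero]
    have hNu : ⟪N, ‖e‖⁻¹ • e⟫ = 0 := by rw [real_inner_smul_right, hNe, mul_zero]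
    have hBu : ⟪B, ‖e‖⁻¹ • e⟫ = 0 := by rw [real_inner_smul_right, hBe, mul_zero]
    have hTu' : ⟪‖e‖⁻¹ • e, T⟫ = 0 := by rw [real_inner_smul_left, hTe', mul_zero]
    have hNu' : ⟪‖e‖⁻¹ • e, N⟫ = 0 := by rw [real_inner_smul_left, hNe', mul_zero]
    have hBu' : ⟪‖e‖⁻¹ • e, B⟫ = 0 := by rw [real_inner_smul_left, hBe', mul_zero]
    have huu : ⟪‖e‖⁻¹ • e, ‖e‖⁻¹ • e⟫ = 1 := by
      rw [real_inner_smul_left, real_inner_smul_right, real_inner_self_eq_norm_sq]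
      field_simp
    have horth : Orthonormal ℝ ![T, N, B, ‖e‖⁻¹ • e] := by
      rw [orthonormal_iff_ite]
      intro i j
      fin_cases i <;> fin_cases j <;>
        simp [hTT, hNN, hBB, hTN, hTB, hNB, hNT, hBT, hBN, hTu, hNu, hBu, hTu', hNu', hBu', huu,
          hTn, hNn, hBn, norm_smul, norm_inv, norm_norm, inv_mul_cancel₀ hen,
          -PiLp.inner_apply]
    have hle := horth.linearIndependent.fintype_card_le_finrank
    simp [finrank_euclideanSpace_fin] at hle
  have hdec : d = ⟪T, d⟫ • T + ⟪N, d⟫ • N + ⟪B, d⟫ • B := by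
    have h : d - (⟪T, d⟫ • T + ⟪N, d⟫ • N + ⟪B, d⟫ • B) = 0 := by
      rw [← he0, he_def]; abel
    exact sub_eq_zero.mp h
  have h1 : ⟪d, ⟪T, d⟫ • T + ⟪N, d⟫ • N + ⟪B, d⟫ • B⟫ = 1 := by
    rw [← hdec, real_inner_self_eq_norm_sq, hd]; norm_num
  rw [inner_add_right, inner_add_right, real_inner_smul_right, real_inner_smul_right,
    real_inner_smul_right, real_inner_comm T d, real_inner_comm N d, real_inner_comm B d] at h1
  linear_combination h1

/-- If ψ is a unit speed curve with κ > 0 whose principal normal makes a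
constant angle arccos n (0 < |n| < 1) with a fixed unit vector d, then with
m = n/√(1-n²) and θ(s) = ∫κ ds (up to a suitable shift of origin c and a sign ε),
τ(s) = ε · m κ(s) θ(s) / √(1 - m² θ(s)²). -/
theorem slant_helix_intrinsic_equation
    (ψ T N B : ℝ → EuclideanSpace ℝ (Fin 3)) (κ τ : ℝ → ℝ) (d : EuclideanSpace ℝ (Fin 3))
    (n m : ℝ)
    (hκpos : ∀ s, 0 < κ s)
    (hψ : ∀ s, HasDerivAt ψ (T s) s)
    (hT : ∀ s, HasDerivAt T (κ s • N s) s)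
    (hN : ∀ s, HasDerivAt N (-(κ s) • T s + τ s • B s) s)
    (hB : ∀ s, HasDerivAt B (-(τ s) • N s) s)
    (hTn : ∀ s, ‖T s‖ = 1) (hNn : ∀ s, ‖N s‖ = 1) (hBn : ∀ s, ‖B s‖ = 1)
    (hTN : ∀ s, ⟪T s, N s⟫ = 0) (hTB : ∀ s, ⟪T s, B s⟫ = 0)
    (hNB : ∀ s, ⟪N s, B s⟫ = 0)
    (hd : ‖d‖ = 1)
    (hn0 : 0 < |n|) (hn1 : |n| < 1)
    (hangle : ∀ s, ⟪N s, d⟫ = n)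
    (hκc : Continuous κ) (hτc : Continuous τ)
    (hnothelix : ∀ s, deriv (fun u => τ u / κ u) s ≠ 0)
    (hm : m = n / Real.sqrt (1 - n ^ 2)) :
    ∃ ε : ℝ, (ε = 1 ∨ ε = -1) ∧ ∃ c : ℝ, ∀ s,
      τ s = ε * (m * κ s * ((∫ u in (0:ℝ)..s, κ u) + c)) /
        Real.sqrt (1 - m ^ 2 * ((∫ u in (0:ℝ)..s, κ u) + c) ^ 2) := by
  have hn0' : n ≠ 0 := by
    intro h; rw [h] at hn0; simp at hn0
  have hn2 : n ^ 2 < 1 := by nlinarith [sq_abs n, abs_nonneg n]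
  have h1n2 : 0 < 1 - n ^ 2 := by linarith
  set a : ℝ → ℝ := fun s => ⟪T s, d⟫ with ha_def
  set b : ℝ → ℝ := fun s => ⟪B s, d⟫ with hb_def
  have ha' : ∀ s, HasDerivAt a (n * κ s) s := by
    intro s
    have h := (hT s).inner ℝ (hasDerivAt_const s d)
    simp only [inner_zero_right, real_inner_smul_left, hangle s, add_zero, zero_add] at h
    rw [mul_comm]
    exact h
  have hb' : ∀ s, HasDerivAt b (-(τ s) * n) s := by
    intro s
    have h := (hB s).inner ℝ (hasDerivAt_const s d)
    simp only [inner_zero_right, real_inner_smul_left, hangle s, add_zero, zero_add] at h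
    exact h
  have hrel : ∀ s, κ s * a s = τ s * b s := by
    intro s
    have h1 := (hN s).inner ℝ (hasDerivAt_const s d)
    have h2 : (fun t => ⟪N t, d⟫) = fun _ => n := funext hangle
    rw [h2] at h1
    have h3 := h1.unique (hasDerivAt_const s n)
    simp only [inner_zero_right, inner_add_left, real_inner_smul_left, add_zero, zero_add] at h3
    have := h3.symm
    linarith [h3]
  have hC : ∀ s, a s ^ 2 + b s ^ 2 = a 0 ^ 2 + b 0 ^ 2 := by
    have hdiff : Differentiable ℝ (fun s => a s ^ 2 + b s ^ 2) := fun s =>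
      (((ha' s).pow 2).add ((hb' s).pow 2)).differentiableAt
    have hderiv : ∀ s, deriv (fun s => a s ^ 2 + b s ^ 2) s = 0 := by
      intro s
      rw [show (fun s => a s ^ 2 + b s ^ 2) = a ^ 2 + b ^ 2 from rfl, (((ha' s).pow 2).add ((hb' s).pow 2)).deriv]
      simp only [pow_one, Nat.cast_ofNat]
      linear_combination 2 * n * (hrel s)
    exact fun s => is_const_of_deriv_eq_zero hdiff hderiv s 0
  have hCval : a 0 ^ 2 + b 0 ^ 2 = 1 - n ^ 2 := by
    have h := orth_decomp (T 0) (N 0) (B 0) d (hTn 0) (hNn 0) (hBn 0) (hTN 0) (hTB 0) (hNB 0) hd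
    rw [hangle 0] at h
    have ha0 : ⟪T 0, d⟫ = a 0 := rfl
    have hb0 : ⟪B 0, d⟫ = b 0 := rfl
    rw [ha0, hb0] at h
    linarith
  have hbne : ∀ s, b s ≠ 0 := by
    intro s hbs
    have has : a s = 0 := by
      have h := hrel s
      rw [hbs, mul_zero] at h
      exact (mul_eq_zero.mp h).resolve_left (hκpos s).ne'
    have hz : a 0 ^ 2 + b 0 ^ 2 = 0 := by rw [← hC s, hbs, has]; ring
    have haz : ∀ t, a t = 0 := by
      intro t
      have h := hC t
      nlinarith [sq_nonneg (a t), sq_nonneg (b t)]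
    have h0 : HasDerivAt (fun _ : ℝ => (0 : ℝ)) (n * κ s) s := by
      have h := ha' s
      rwa [show a = fun _ : ℝ => (0 : ℝ) from funext haz] at h
    have := h0.unique (hasDerivAt_const s 0)
    exact mul_ne_zero hn0' (hκpos s).ne' this
  have hbcont : Continuous b := by
    have : Differentiable ℝ b := fun s => (hb' s).differentiableAt
    exact this.continuous
  have hbb : ∀ s, 0 < b s * b 0 := by
    intro s
    rcases (mul_ne_zero (hbne s) (hbne 0)).lt_or_gt with h | h
    · exfalso
      have h0 : (0 : ℝ) ∈ Set.uIcc (b 0) (b s) := by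
        rcases lt_or_gt_of_ne (hbne 0) with h1 | h1
        · have h2 : 0 < b s := by nlinarith
          exact Set.mem_uIcc.mpr (Or.inl ⟨h1.le, h2.le⟩)
        · have h2 : b s < 0 := by nlinarith
          exact Set.mem_uIcc.mpr (Or.inr ⟨h2.le, h1.le⟩)
      obtain ⟨x, _, hx⟩ := intermediate_value_uIcc hbcont.continuousOn h0
      exact hbne x hx
    · exact h
  set ε : ℝ := if 0 < b 0 then 1 else -1 with hε_def
  have hε2 : ε * ε = 1 := by
    by_cases h0 : 0 < b 0 <;> simp [hε_def, h0]
  have hεb : ∀ s, b s = ε * Real.sqrt (b s ^ 2) := by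
    intro s
    rw [Real.sqrt_sq_eq_abs]
    by_cases h0 : 0 < b 0
    · have hpos : 0 < b s := by nlinarith [hbb s]
      simp [hε_def, h0, abs_of_pos hpos]
    · have hb0 : b 0 < 0 := lt_of_le_of_ne (not_lt.mp h0) (hbne 0)
      have hneg : b s < 0 := by nlinarith [hbb s]
      simp [hε_def, h0, abs_of_neg hneg]
  refine ⟨ε, by by_cases h0 : 0 < b 0 <;> simp [hε_def, h0], a 0 / n, ?_⟩
  intro s
  set θ : ℝ := (∫ u in (0:ℝ)..s, κ u) + a 0 / n with hθ_def
  have haθ : a s = n * θ := by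
    have hInt : ∫ u in (0:ℝ)..s, n * κ u = a s - a 0 :=
      intervalIntegral.integral_eq_sub_of_hasDerivAt (fun x _ => ha' x)
        ((continuous_const.mul hκc).intervalIntegrable 0 s)
    rw [intervalIntegral.integral_const_mul] at hInt
    have : n * θ = n * (∫ u in (0:ℝ)..s, κ u) + a 0 := by
      rw [hθ_def, mul_add, mul_comm n (a 0 / n), div_mul_cancel₀ _ hn0']
    rw [this]
    linarith
  have hb2 : b s ^ 2 = (1 - n ^ 2) * (1 - m ^ 2 * θ ^ 2) := by
    have h1 : b s ^ 2 = 1 - n ^ 2 - a s ^ 2 := by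
      have := hC s; linarith
    have hms : m ^ 2 * (1 - n ^ 2) = n ^ 2 := by
      rw [hm, div_pow, Real.sq_sqrt h1n2.le]
      field_simp
    rw [h1, haθ]
    nlinarith [hms]
  have hbsq : 0 < b s ^ 2 := by
    have := abs_pos.mpr (hbne s); nlinarith [sq_abs (b s)]
  have hpos : 0 < 1 - m ^ 2 * θ ^ 2 := by nlinarith
  have hbval : b s = ε * (Real.sqrt (1 - n ^ 2) * Real.sqrt (1 - m ^ 2 * θ ^ 2)) := by
    rw [hεb s, hb2, Real.sqrt_mul h1n2.le]
  have hsq1 : (0:ℝ) < Real.sqrt (1 - n ^ 2) := Real.sqrt_pos.mpr h1n2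
  have hsq2 : (0:ℝ) < Real.sqrt (1 - m ^ 2 * θ ^ 2) := Real.sqrt_pos.mpr hpos
  have hn_eq : n = m * Real.sqrt (1 - n ^ 2) := by
    rw [hm]; field_simp
  have hrel' := hrel s
  rw [haθ, hbval] at hrel'
  have hrel2 : κ s * (m * θ) = τ s * (ε * Real.sqrt (1 - m ^ 2 * θ ^ 2)) := by
    apply mul_left_cancel₀ hsq1.ne'
    linear_combination hrel' + (-(κ s * θ)) * hn_eq
  rw [eq_div_iff hsq2.ne']
  linear_combination (-ε) * hrel2 + (-(τ s * Real.sqrt (1 - m ^ 2 * θ ^ 2))) * hε2
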